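/- arXiv:2310.20263 — 6 statements merged into one kernel-verified Lean document; each statement's English description precedes it below -/
import Mathlib

section
/- Let W be a topological space, let A and B be path-connected subsets of W, and let x, y ∈ A ∩ B. Suppose that every element of the fundamental group π₁(W, x) can be written as [a] · [b], where a is a loop at x with range contained in A and b is a loop at x with range contained in B. Then there exist paths γ' : [0,1] → W from x to y with range(γ') ⊆ A and γ'' : [0,1] → W from x to y with range(γ'') ⊆ B such that γ' and γ'' are homotopic relative to endpoints in W. -/
open CategoryTheory

attribute [local instance] Path.Homotopic.setoid

/-- If `A` and `B` are path-connected subsets of `W`, `x, y ∈ A ∩ B`, and every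
element of `π₁(W, x)` can be written as `[a] · [b]` with `a` a loop at `x` in `A` and `b` a loop
at `x` in `B`, then there are paths `γ'` from `x` to `y` in `A` and `γ''` from `x` to `y` in `B`
that are homotopic rel endpoints in `W`. -/
theorem exists_whitney_pair_of_pi1_decomposition
    {W : Type*} [TopologicalSpace W] (A B : Set W)
    (hA : IsPathConnected A) (hB : IsPathConnected B)
    (x y : W) (hx : x ∈ A ∩ B) (hy : y ∈ A ∩ B)
    (hdecomp : ∀ ℓ : Path x x, ∃ (a b : Path x x),
      Set.range a ⊆ A ∧ Set.range b ⊆ B ∧ ℓ.Homotopic (a.trans b)) :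
    ∃ (γ' γ'' : Path x y), Set.range γ' ⊆ A ∧ Set.range γ'' ⊆ B ∧ γ'.Homotopic γ'' := by
  obtain ⟨hxA, hxB⟩ := hx
  obtain ⟨hyA, hyB⟩ := hy
  obtain ⟨p, hp⟩ := hA.joinedIn x hxA y hyA
  obtain ⟨q, hq⟩ := hB.joinedIn x hxB y hyB
  obtain ⟨a, b, ha, hb, hab⟩ := hdecomp (p.trans q.symm)
  refine ⟨a.symm.trans p, b.trans q, ?_, ?_, ?_⟩
  · rw [Path.trans_range, Path.symm_range]
    exact Set.union_subset ha (Set.range_subset_iff.2 hp)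
  · rw [Path.trans_range]
    exact Set.union_subset hb (Set.range_subset_iff.2 hq)
  · -- work in the fundamental groupoid
    let X : FundamentalGroupoid W := ⟨x⟩
    let Y : FundamentalGroupoid W := ⟨y⟩
    let P : X ⟶ Y := ⟦p⟧
    let Q : X ⟶ Y := ⟦q⟧
    let A' : X ⟶ X := ⟦a⟧
    let B' : X ⟶ X := ⟦b⟧
    have h : P ≫ Groupoid.inv Q = A' ≫ B' := by
      show Path.Homotopic.Quotient.trans (⟦p⟧ : X ⟶ Y) ⟦q.symm⟧ =
        Path.Homotopic.Quotient.trans (⟦a⟧ : X ⟶ X) ⟦b⟧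
      show (⟦p.trans q.symm⟧ : X ⟶ X) = ⟦a.trans b⟧
      exact Quotient.sound hab
    have h2 : P = A' ≫ B' ≫ Q := by
      rw [← Category.assoc, ← h, Category.assoc, Groupoid.inv_comp, Category.comp_id]
    have h3 : Groupoid.inv A' ≫ P = B' ≫ Q := by
      rw [h2, ← Category.assoc, Groupoid.inv_comp, Category.id_comp]
    have h4 : (⟦a.symm.trans p⟧ : X ⟶ Y) = ⟦b.trans q⟧ := by
      show Groupoid.inv A' ≫ P = B' ≫ Q
      exact h3
    exact Quotient.exact h4
end

section
/- Let p_X : X̃ → X and p_Y : Ỹ → Y be covering maps whose total spaces are path-connected, locally path-connected and simply connected, let φ, ψ : X → Y be continuous, and let φ̃₀, ψ̃₀ be liftings of φ and ψ respectively. Let δ₁, δ₂ be deck transformations of p_Y. If there exist deck transformations α, γ of p_X and deck transformations η, θ of p_Y such that φ̃₀ ∘ α = η ∘ φ̃₀, ψ̃₀ ∘ γ = θ ∘ ψ̃₀, and δ₂ = η⁻¹ ∘ δ₁ ∘ θ, then the common value class determined by (φ̃₀, δ₁ ∘ ψ̃₀) equals the common value class determined by (φ̃₀, δ₂ ∘ ψ̃₀),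 i.e. (p_X × p_X)(cvp(φ̃₀, δ₁ ∘ ψ̃₀)) = (p_X × p_X)(cvp(φ̃₀, δ₂ ∘ ψ̃₀)). -/
/-- The common value class determined by a pair of liftings `(f, g)`:
the image under `p_X × p_X` of `cvp(f, g) = {(ũ, ṽ) | f ũ = g ṽ}`. -/
def commonValueClass {X X' Y' : Type*} (pX : X' → X) (f g : X' → Y') : Set (X × X) :=
  (fun q : X' × X' => (pX q.1, pX q.2)) '' {q : X' × X' | f q.1 = g q.2}

/-- If `δ₂ = η⁻¹ ∘ δ₁ ∘ θ` for deck transformations `η, θ` of `p_Y` compatible with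
deck transformations `α, γ` of `p_X` via `φ̃₀ ∘ α = η ∘ φ̃₀` and `ψ̃₀ ∘ γ = θ ∘ ψ̃₀`, then the
common value classes determined by `(φ̃₀, δ₁ ∘ ψ̃₀)` and `(φ̃₀, δ₂ ∘ ψ̃₀)` coincide. -/
theorem commonValueClass_eq_of_doubleCoset
    {X Y X' Y' : Type*} [TopologicalSpace X] [TopologicalSpace Y]
    [TopologicalSpace X'] [TopologicalSpace Y']
    [PathConnectedSpace X'] [LocallyPathConnectedSpace X'] [SimplyConnectedSpace X']
    [PathConnectedSpace Y'] [LocallyPathConnectedSpace Y'] [SimplyConnectedSpace Y']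
    (pX : X' → X) (pY : Y' → Y) (hpX : IsCoveringMap pX) (hpY : IsCoveringMap pY)
    (φ ψ : X → Y) (hφ : Continuous φ) (hψ : Continuous ψ)
    (φ₀ ψ₀ : X' → Y') (hφ₀ : Continuous φ₀) (hψ₀ : Continuous ψ₀)
    (hliftφ : pY ∘ φ₀ = φ ∘ pX) (hliftψ : pY ∘ ψ₀ = ψ ∘ pX)
    (δ₁ δ₂ : Y' ≃ₜ Y') (hδ₁ : pY ∘ δ₁ = pY) (hδ₂ : pY ∘ δ₂ = pY)
    (h : ∃ (α γ : X' ≃ₜ X') (η θ : Y' ≃ₜ Y'),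
      pX ∘ α = pX ∧ pX ∘ γ = pX ∧ pY ∘ η = pY ∧ pY ∘ θ = pY ∧
      φ₀ ∘ α = η ∘ φ₀ ∧ ψ₀ ∘ γ = θ ∘ ψ₀ ∧
      (δ₂ : Y' → Y') = (η.symm : Y' → Y') ∘ (δ₁ : Y' → Y') ∘ (θ : Y' → Y')) :
    commonValueClass pX φ₀ ((δ₁ : Y' → Y') ∘ ψ₀) =
      commonValueClass pX φ₀ ((δ₂ : Y' → Y') ∘ ψ₀) := by
  obtain ⟨α, γ, η, θ, hα, hγ, hη, hθ, hφα, hψγ, hδ⟩ := h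
  ext ⟨u, v⟩
  constructor
  · rintro ⟨⟨a, b⟩, hab, heq⟩
    refine ⟨(α.symm a, γ.symm b), ?_, ?_⟩
    · show φ₀ (α.symm a) = δ₂ (ψ₀ (γ.symm b))
      have h1 : η (φ₀ (α.symm a)) = φ₀ a := by
        have := congrFun hφα (α.symm a); simpa using this.symm
      have h2 : θ (ψ₀ (γ.symm b)) = ψ₀ b := by
        have := congrFun hψγ (γ.symm b); simpa using this.symm
      have hab' : φ₀ a = δ₁ (ψ₀ b) := hab
      have : δ₂ (ψ₀ (γ.symm b)) = η.symm (δ₁ (θ (ψ₀ (γ.symm b)))) := congrFun hδ _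
      rw [this, h2, ← hab', ← h1]; simp
    · simp only at heq ⊢
      have ha : pX (α.symm a) = pX a := by
        have := congrFun hα (α.symm a); simpa using this.symm
      have hb : pX (γ.symm b) = pX b := by
        have := congrFun hγ (γ.symm b); simpa using this.symm
      rw [← heq]; simp [ha, hb]
  · rintro ⟨⟨a, b⟩, hab, heq⟩
    refine ⟨(α a, γ b), ?_, ?_⟩
    · show φ₀ (α a) = δ₁ (ψ₀ (γ b))
      have h1 : φ₀ (α a) = η (φ₀ a) := congrFun hφα a
      have h2 : ψ₀ (γ b) = θ (ψ₀ b) := congrFun hψγ b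
      have hab' : φ₀ a = η.symm (δ₁ (θ (ψ₀ b))) := by
        have := congrFun hδ (ψ₀ b); rw [hab]; exact this
      rw [h1, h2, hab']; simp
    · simp only at heq ⊢
      have ha : pX (α a) = pX a := congrFun hα a
      have hb : pX (γ b) = pX b := congrFun hγ b
      rw [← heq]; simp [ha, hb]
end

section
/- Let p_X : X̃ → X and p_Y : Ỹ → Y be covering maps whose total spaces are path-connected, locally path-connected and simply connected, let φ, ψ : X → Y be continuous, and let φ̃₀, ψ̃₀ be liftings of φ and ψ respectively. Let δ₁, δ₂ be deck transformations of p_Y. If the sets (p_X × p_X)(cvp(φ̃₀, δ₁ ∘ ψ̃₀)) and (p_X × p_X)(cvp(φ̃₀, δ₂ ∘ ψ̃₀)) have a common element, then there exist deck transformations α, γ of p_X and deck transformations η, θ of p_Y such that φ̃₀ ∘ α = η ∘ φ̃₀, ψ̃₀ ∘ γ = θ ∘ ψ̃₀, and δ₂ = η⁻¹ ∘ δ₁ ∘ θ. -/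
open Set Metric

namespace CVPAux

variable {E X : Type*} [TopologicalSpace E] [TopologicalSpace X] {p : E → X}

theorem isClopen_range_aux (hp : IsCoveringMap p) : IsClopen (range p) := by
  refine ⟨?_, hp.isOpenMap.isOpen_range⟩
  rw [← isOpen_compl_iff, isOpen_iff_forall_mem_open]
  intro y hy
  obtain ⟨_, U, hyU, hU, _, H, _⟩ := hp y
  refine ⟨U, ?_, hU, hyU⟩
  rintro z hzU ⟨e, rfl⟩
  exact hy ⟨_, (H ⟨e, hzU⟩).2.2⟩

theorem nonempty_fiber_aux {Z : Type*} [TopologicalSpace Z] [PreconnectedSpace Z]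
    (hp : IsCoveringMap p) {g : Z → X} (hg : Continuous g) (z₀ : Z) (e₀ : E)
    (h : p e₀ = g z₀) (z : Z) : Nonempty (p ⁻¹' {g z}) := by
  have hc := (isClopen_range_aux hp).preimage hg
  have : g ⁻¹' range p = univ := hc.eq_univ ⟨z₀, e₀, h⟩
  obtain ⟨e, he⟩ : g z ∈ range p := by rw [← mem_preimage, this]; trivial
  exact ⟨⟨e, he⟩⟩

theorem exists_lift_Icc (hp : IsCoveringMap p) {γ : ℝ → X} (hγ : Continuous γ)
    (e₀ : E) (h0 : p e₀ = γ 0) :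
    ∃ Γ : ℝ → E, Continuous Γ ∧ Γ 0 = e₀ ∧ ∀ x ∈ Icc (0:ℝ) 1, p (Γ x) = γ x := by
  haveI : ∀ x, Nonempty (p ⁻¹' {γ x}) := nonempty_fiber_aux hp hγ 0 e₀ h0
  obtain ⟨δ, hδ, hcov⟩ := lebesgue_number_lemma_of_metric
    (isCompact_Icc : IsCompact (Icc (0:ℝ) 1))
    (fun x : ℝ => ((hp (γ x)).toTrivialization.open_baseSet.preimage hγ))
    (fun x hx => mem_iUnion.2 ⟨x, (hp (γ x)).mem_toTrivialization_baseSet⟩)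
  obtain ⟨m, hm⟩ := exists_nat_one_div_lt hδ
  set N : ℕ := m + 1 with hNdef
  have hN : (0:ℝ) < N := by positivity
  have hπN : (1:ℝ)/N < δ := by exact_mod_cast hm
  have main : ∀ k : ℕ, k ≤ N → ∃ Γ : ℝ → E, Continuous Γ ∧ Γ 0 = e₀ ∧
      ∀ x ∈ Icc (0:ℝ) ((k:ℝ)/N), p (Γ x) = γ x := by
    intro k hk
    induction k with
    | zero =>
      refine ⟨fun _ => e₀, continuous_const, rfl, fun x hx => ?_⟩
      have : x = 0 := le_antisymm (by simpa using hx.2) hx.1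
      rw [this, h0]
    | succ k ih =>
      have hkN : k < N := Nat.lt_of_succ_le hk
      obtain ⟨Γ, hΓc, hΓ0, hΓp⟩ := ih hkN.le
      have hmono : (k:ℝ)/N ≤ ((k:ℝ)+1)/N := by gcongr; linarith
      have hk0 : (0:ℝ) ≤ (k:ℝ)/N := by positivity
      have hk1 : ((k:ℝ)+1)/N ≤ 1 := by
        rw [div_le_one hN]
        have : ((k:ℝ)+1) ≤ (N:ℝ) := by exact_mod_cast hkN
        linarith
      obtain ⟨i, hi⟩ := hcov ((k:ℝ)/N) ⟨hk0, hmono.trans hk1⟩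
      set T := (hp (γ i)).toTrivialization with hT
      have hsub : ∀ x ∈ Icc ((k:ℝ)/N) (((k:ℝ)+1)/N), γ x ∈ T.baseSet := by
        intro x hx
        apply hi
        rw [mem_ball, Real.dist_eq, abs_sub_lt_iff]
        constructor
        · have : x ≤ (k:ℝ)/N + 1/N := by rw [← add_div]; exact hx.2
          linarith
        · linarith [hx.1]
      set e := Γ ((k:ℝ)/N) with he
      have hek : p e = γ ((k:ℝ)/N) := hΓp _ ⟨hk0, le_refl _⟩
      have hes : e ∈ T.source := T.mem_source.2 (hek ▸ hsub _ ⟨le_refl _, hmono⟩)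
      set cl : ℝ → ℝ := fun x => max ((k:ℝ)/N) (min x (((k:ℝ)+1)/N)) with hcl
      have hclmem : ∀ x, cl x ∈ Icc ((k:ℝ)/N) (((k:ℝ)+1)/N) := fun x =>
        ⟨le_max_left _ _, max_le hmono (min_le_right _ _)⟩
      have hcleq : ∀ x ∈ Icc ((k:ℝ)/N) (((k:ℝ)+1)/N), cl x = x := fun x hx => by
        simp only [hcl]; rw [min_eq_left hx.2, max_eq_right hx.1]
      have hclcont : Continuous cl := (continuous_const.max (continuous_id.min continuous_const))
      set ℓ : ℝ → E := fun x => T.toOpenPartialHomeomorph.symm (γ (cl x), (T e).2) with hℓ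
      have hℓcont : Continuous ℓ := by
        apply T.toOpenPartialHomeomorph.continuousOn_symm.comp_continuous
          (((hγ.comp hclcont).prodMk continuous_const))
          (fun x => T.mem_target.2 (hsub _ (hclmem x)))
      have hℓk : ℓ ((k:ℝ)/N) = e := by
        rw [hℓ]
        simp only
        rw [hcleq _ ⟨le_refl _, hmono⟩, ← hek, T.symm_apply_mk_proj hes]
      have hℓp : ∀ x ∈ Icc ((k:ℝ)/N) (((k:ℝ)+1)/N), p (ℓ x) = γ x := by
        intro x hx
        rw [hℓ]
        simp only
        rw [hcleq _ hx]
        exact T.proj_symm_apply' (hsub x hx)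
      refine ⟨fun x => if x ≤ (k:ℝ)/N then Γ x else ℓ x, ?_, ?_, ?_⟩
      · exact Continuous.if_le hΓc hℓcont continuous_id continuous_const
          (fun x hx => by rw [hx, hℓk])
      · simp only [if_pos hk0, hΓ0]
      · intro x hx
        have hcast : ((k+1:ℕ):ℝ) = (k:ℝ)+1 := by push_cast; ring
        rw [hcast] at hx
        by_cases hxk : x ≤ (k:ℝ)/N
        · simp only [if_pos hxk]; exact hΓp x ⟨hx.1, hxk⟩
        · simp only [if_neg hxk]; exact hℓp x ⟨le_of_not_ge hxk, hx.2⟩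
  obtain ⟨Γ, h1, h2, h3⟩ := main N (le_refl N)
  refine ⟨Γ, h1, h2, fun x hx => h3 x ?_⟩
  rwa [div_self hN.ne']

theorem eqOn_lift (hp : IsCoveringMap p) {γ : ℝ → X} {a b : ℝ} {Γ₁ Γ₂ : ℝ → E}
    (h₁ : ContinuousOn Γ₁ (Icc a b)) (h₂ : ContinuousOn Γ₂ (Icc a b))
    (hp₁ : ∀ x ∈ Icc a b, p (Γ₁ x) = γ x) (hp₂ : ∀ x ∈ Icc a b, p (Γ₂ x) = γ x)
    (hab : a ≤ b) (hae : Γ₁ a = Γ₂ a) : EqOn Γ₁ Γ₂ (Icc a b) :=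
  hp.eqOn_of_comp_eqOn isPreconnected_Icc h₁ h₂
    (fun x hx => by simp only [Function.comp_apply, hp₁ x hx, hp₂ x hx])
    (left_mem_Icc.2 hab) hae

theorem monodromy (hp : IsCoveringMap p) {H : ℝ × ℝ → X} (hH : Continuous H)
    (hy : ∀ s ∈ Icc (0:ℝ) 1, H (s, 1) = H (0, 1))
    {Γ : ℝ → ℝ → E} (hΓc : ∀ s ∈ Icc (0:ℝ) 1, Continuous (Γ s))
    (hΓ0 : ∀ s ∈ Icc (0:ℝ) 1, Γ s 0 = Γ 0 0)
    (hΓp : ∀ s ∈ Icc (0:ℝ) 1, ∀ t ∈ Icc (0:ℝ) 1, p (Γ s t) = H (s, t)) :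
    Γ 0 1 = Γ 1 1 := by
  haveI : ∀ q, Nonempty (p ⁻¹' {H q}) := nonempty_fiber_aux hp hH (0, 1) (Γ 0 1)
    (hΓp 0 ⟨le_refl _, zero_le_one⟩ 1 ⟨zero_le_one, le_refl _⟩)
  obtain ⟨δ, hδ, hcov⟩ := lebesgue_number_lemma_of_metric
    ((isCompact_Icc.prod isCompact_Icc) : IsCompact ((Icc (0:ℝ) 1) ×ˢ (Icc (0:ℝ) 1)))
    (fun q : ℝ × ℝ => ((hp (H q)).toTrivialization.open_baseSet.preimage hH))
    (fun q hq => mem_iUnion.2 ⟨q, (hp (H q)).mem_toTrivialization_baseSet⟩)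
  obtain ⟨m, hm⟩ := exists_nat_one_div_lt (half_pos hδ)
  set N : ℕ := m + 1 with hNdef
  have hN : (0:ℝ) < N := by positivity
  have hπN : (1:ℝ)/N < δ/2 := by exact_mod_cast hm
  -- local constancy of endpoint
  have key : ∀ s₀ ∈ Icc (0:ℝ) 1, ∀ s ∈ Icc (0:ℝ) 1, |s - s₀| < δ/2 → Γ s 1 = Γ s₀ 1 := by
    intro s₀ hs₀
    set J : Set ℝ := {s | s ∈ Icc (0:ℝ) 1 ∧ |s - s₀| < δ/2} with hJdef
    have hJconn : IsPreconnected J := by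
      have : J = Icc (0:ℝ) 1 ∩ Ioo (s₀ - δ/2) (s₀ + δ/2) := by
        ext s
        simp only [hJdef, mem_setOf_eq, mem_inter_iff, mem_Ioo, abs_sub_lt_iff]
        constructor
        · rintro ⟨h1, h2, h3⟩; exact ⟨h1, by linarith, by linarith⟩
        · rintro ⟨h1, h2, h3⟩; exact ⟨h1, by linarith, by linarith⟩
      rw [this]
      exact (Set.ordConnected_Icc.inter Set.ordConnected_Ioo).isPreconnected
    have hs₀J : s₀ ∈ J := ⟨hs₀, by simp [abs_of_nonneg, half_pos hδ]⟩
    have htriv : ∀ k : ℕ, k < N → ∃ (z : X) (T : Bundle.Trivialization (↑(p ⁻¹' {z})) p),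
        ∀ s ∈ J, ∀ t ∈ Icc ((k:ℝ)/N) (((k:ℝ)+1)/N), H (s, t) ∈ T.baseSet := by
      intro k hk
      have hk1 : ((k:ℝ)+1)/N ≤ 1 := by
        rw [div_le_one hN]
        have : ((k:ℝ)+1) ≤ (N:ℝ) := by exact_mod_cast hk
        linarith
      have hkmem : (k:ℝ)/N ∈ Icc (0:ℝ) 1 := ⟨by positivity, le_trans (by gcongr <;> linarith) hk1⟩
      obtain ⟨q, hq⟩ := hcov (s₀, (k:ℝ)/N) (mem_prod.2 ⟨hs₀, hkmem⟩)
      refine ⟨H q, (hp (H q)).toTrivialization, fun s hs t ht => hq ?_⟩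
      rw [mem_ball, Prod.dist_eq]
      apply max_lt (lt_of_lt_of_le (by rw [Real.dist_eq]; exact hs.2) (by linarith))
      rw [Real.dist_eq, abs_sub_lt_iff]
      constructor
      · have : t ≤ (k:ℝ)/N + 1/N := by rw [← add_div]; exact ht.2
        linarith
      · linarith [ht.1]
    choose z T hT using htriv
    have claim : ∀ k : ℕ, k ≤ N → ∃ D : ℝ → E, ContinuousOn D J ∧
        ∀ s ∈ J, Γ s ((k:ℝ)/N) = D s := by
      intro k hk
      induction k with
      | zero =>
        refine ⟨fun _ => Γ 0 0, continuousOn_const, fun s hs => ?_⟩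
        simpa using hΓ0 s hs.1
      | succ k ih =>
        have hkN : k < N := Nat.lt_of_succ_le hk
        obtain ⟨D, hDc, hDe⟩ := ih hkN.le
        have hmono : (k:ℝ)/N ≤ ((k:ℝ)+1)/N := by gcongr; linarith
        have hk0 : (0:ℝ) ≤ (k:ℝ)/N := by positivity
        have hk1 : ((k:ℝ)+1)/N ≤ 1 := by
          rw [div_le_one hN]
          have : ((k:ℝ)+1) ≤ (N:ℝ) := by exact_mod_cast hkN
          linarith
        have hsub : ∀ s ∈ J, ∀ t ∈ Icc ((k:ℝ)/N) (((k:ℝ)+1)/N), H (s,t) ∈ (T k hkN).baseSet :=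
          hT k hkN
        have hIccsub : Icc ((k:ℝ)/N) (((k:ℝ)+1)/N) ⊆ Icc (0:ℝ) 1 :=
          Icc_subset_Icc hk0 hk1
        have hDmem : ∀ s ∈ J, p (D s) = H (s, (k:ℝ)/N) := fun s hs => by
          rw [← hDe s hs]
          exact hΓp s hs.1 _ ⟨hk0, hmono.trans hk1⟩
        have hDsrc : ∀ s ∈ J, D s ∈ (T k hkN).source := fun s hs =>
          (T k hkN).mem_source.2 ((hDmem s hs) ▸ hsub s hs _ ⟨le_refl _, hmono⟩)
        have hQ : ∀ s ∈ J, ∀ t ∈ Icc ((k:ℝ)/N) (((k:ℝ)+1)/N),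
            Γ s t = (T k hkN).toOpenPartialHomeomorph.symm (H (s, t), ((T k hkN) (D s)).2) := by
          intro s hs
          refine eqOn_lift (γ := fun t => H (s, t))
            (Γ₂ := fun t => (T k hkN).toOpenPartialHomeomorph.symm (H (s, t), ((T k hkN) (D s)).2))
            hp ((hΓc s hs.1).continuousOn) ?_ (fun t ht => hΓp s hs.1 t (hIccsub ht))
            (fun t ht => (T k hkN).proj_symm_apply' (hsub s hs t ht)) hmono ?_
          · exact ((T k hkN).toOpenPartialHomeomorph.continuousOn_symm.comp
              (((hH.comp (continuous_const.prodMk continuous_id)).prodMk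
                continuous_const).continuousOn)
              (fun t ht => (T k hkN).mem_target.2 (hsub s hs t ht)))
          · rw [hDe s hs]
            conv_lhs => rw [← (T k hkN).symm_apply_mk_proj (hDsrc s hs)]
            rw [hDmem s hs]
        refine ⟨fun s => (T k hkN).toOpenPartialHomeomorph.symm
            (H (s, ((k:ℝ)+1)/N), ((T k hkN) (D s)).2), ?_, ?_⟩
        · refine (T k hkN).toOpenPartialHomeomorph.continuousOn_symm.comp ?_ ?_
          · refine ContinuousOn.prodMk
              ((hH.comp (continuous_id.prodMk continuous_const)).continuousOn) ?_
            exact continuous_snd.comp_continuousOn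
              ((T k hkN).toOpenPartialHomeomorph.continuousOn.comp hDc (fun s hs => hDsrc s hs))
          · exact fun s hs => (T k hkN).mem_target.2 (hsub s hs _ ⟨hmono, le_refl _⟩)
        · intro s hs
          have hcast : ((k+1:ℕ):ℝ) = (k:ℝ)+1 := by push_cast; ring
          rw [hcast]
          exact hQ s hs _ ⟨hmono, le_refl _⟩
    obtain ⟨D, hDc, hDe⟩ := claim N (le_refl N)
    have hNN : ((N:ℕ):ℝ)/N = 1 := div_self hN.ne'
    have hD1 : ∀ s ∈ J, Γ s 1 = D s := fun s hs => by rw [← hNN]; exact hDe s hs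
    intro s hs hss
    have hsJ : s ∈ J := ⟨hs, hss⟩
    have hconst : D s = D s₀ := by
      apply hp.constOn_of_comp hJconn hDc ?_ hsJ hs₀J
      intro a ha a' ha'
      have h1 : p (D a) = H (0,1) := by
        rw [← hD1 a ha, hΓp a ha.1 1 ⟨zero_le_one, le_refl _⟩]; exact hy a ha.1
      have h2 : p (D a') = H (0,1) := by
        rw [← hD1 a' ha', hΓp a' ha'.1 1 ⟨zero_le_one, le_refl _⟩]; exact hy a' ha'.1
      rw [h1, h2]
    rw [hD1 s hsJ, hD1 s₀ hs₀J, hconst]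
  -- conclude by local constancy on the preconnected interval
  haveI : PreconnectedSpace (Icc (0:ℝ) 1) :=
    Subtype.preconnectedSpace isPreconnected_Icc
  set G : (Icc (0:ℝ) 1) → E := fun s => Γ s.1 1 with hG
  have hlc : IsLocallyConstant G := by
    rw [IsLocallyConstant.iff_exists_open]
    rintro ⟨s₀, hs₀⟩
    refine ⟨{s : Icc (0:ℝ) 1 | |s.1 - s₀| < δ/2}, ?_, by simp [half_pos hδ], ?_⟩
    · have : {s : Icc (0:ℝ) 1 | |s.1 - s₀| < δ/2} =
          Subtype.val ⁻¹' (ball s₀ (δ/2)) := by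
        ext s; simp [Real.dist_eq]
      rw [this]
      exact isOpen_ball.preimage continuous_subtype_val
    · rintro ⟨s, hs⟩ h
      exact key s₀ hs₀ s hs h
  have h01 : G ⟨0, by norm_num⟩ = G ⟨1, by norm_num⟩ :=
    hlc.apply_eq_of_preconnectedSpace _ _
  exact h01

theorem lift_end_eq (hp : IsCoveringMap p) {x y : X} {p₁ p₂ : Path x y}
    (h : p₁.Homotopic p₂) {Γ₁ Γ₂ : ℝ → E}
    (h₁c : Continuous Γ₁) (h₂c : Continuous Γ₂) (h00 : Γ₁ 0 = Γ₂ 0)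
    (h₁p : ∀ t ∈ Icc (0:ℝ) 1, p (Γ₁ t) = p₁ (projIcc 0 1 zero_le_one t))
    (h₂p : ∀ t ∈ Icc (0:ℝ) 1, p (Γ₂ t) = p₂ (projIcc 0 1 zero_le_one t)) :
    Γ₁ 1 = Γ₂ 1 := by
  obtain ⟨F⟩ := h
  set H : ℝ × ℝ → X := fun q => F (projIcc 0 1 zero_le_one q.1, projIcc 0 1 zero_le_one q.2)
    with hHdef
  have hH : Continuous H := F.continuous.comp
    ((continuous_projIcc.comp continuous_fst).prodMk (continuous_projIcc.comp continuous_snd))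
  have hH0 : ∀ s : ℝ, H (s, 0) = x := fun s => by
    simp only [hHdef, projIcc_left]
    exact F.source _
  have hH1 : ∀ s : ℝ, H (s, 1) = y := fun s => by
    simp only [hHdef, projIcc_right]
    exact F.target _
  have hHs0 : ∀ t : ℝ, H (0, t) = p₁ (projIcc 0 1 zero_le_one t) := fun t => by
    simp only [hHdef, projIcc_left]
    exact F.apply_zero _
  have hHs1 : ∀ t : ℝ, H (1, t) = p₂ (projIcc 0 1 zero_le_one t) := fun t => by
    simp only [hHdef, projIcc_right]
    exact F.apply_one _
  have hex : ∀ s : ℝ, ∃ Γ : ℝ → E, Continuous Γ ∧ Γ 0 = Γ₁ 0 ∧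
      ∀ t ∈ Icc (0:ℝ) 1, p (Γ t) = H (s, t) := by
    intro s
    refine exists_lift_Icc hp (hH.comp (continuous_const.prodMk continuous_id)) (Γ₁ 0) ?_
    show p (Γ₁ 0) = H (s, 0)
    rw [hH0, h₁p 0 ⟨le_refl _, zero_le_one⟩, projIcc_left]
    exact p₁.source
  choose Λ hΛc hΛ0 hΛp using hex
  have hmono := monodromy hp hH (fun s _ => (hH1 s).trans (hH1 0).symm)
    (fun s _ => hΛc s) (fun s _ => (hΛ0 s).trans (hΛ0 0).symm)
    (fun s hs t ht => hΛp s t ht)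
  have h1 : Γ₁ 1 = Λ 0 1 := by
    have := eqOn_lift (γ := fun t => H (0, t)) hp h₁c.continuousOn (hΛc 0).continuousOn
      (fun t ht => by show p (Γ₁ t) = H (0, t); rw [h₁p t ht, hHs0])
      (fun t ht => hΛp 0 t ht) zero_le_one ((hΛ0 0).symm)
    exact this ⟨zero_le_one, le_refl _⟩
  have h2 : Γ₂ 1 = Λ 1 1 := by
    have := eqOn_lift (γ := fun t => H (1, t)) hp h₂c.continuousOn (hΛc 1).continuousOn
      (fun t ht => by show p (Γ₂ t) = H (1, t); rw [h₂p t ht, hHs1])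
      (fun t ht => hΛp 1 t ht) zero_le_one (((hΛ0 1).trans h00).symm)
    exact this ⟨zero_le_one, le_refl _⟩
  rw [h1, h2, hmono]

theorem exists_lift {A : Type*} [TopologicalSpace A] [PathConnectedSpace A]
    [LocallyPathConnectedSpace A] [SimplyConnectedSpace A]
    (hp : IsCoveringMap p) {f : A → X} (hf : Continuous f) (a₀ : A) (e₀ : E)
    (h0 : p e₀ = f a₀) : ∃ g : A → E, Continuous g ∧ p ∘ g = f ∧ g a₀ = e₀ := by
  have hex : ∀ a : A, ∃ Γ : ℝ → E, Continuous Γ ∧ Γ 0 = e₀ ∧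
      ∀ t ∈ Icc (0:ℝ) 1, p (Γ t) =
        f ((PathConnectedSpace.somePath a₀ a) (projIcc 0 1 zero_le_one t)) := by
    intro a
    refine exists_lift_Icc hp
      (hf.comp ((PathConnectedSpace.somePath a₀ a).continuous.comp continuous_projIcc)) e₀ ?_
    show p e₀ = f ((PathConnectedSpace.somePath a₀ a) (projIcc 0 1 zero_le_one 0))
    rw [projIcc_left, h0]
    congr 1
    exact (PathConnectedSpace.somePath a₀ a).source.symm
  choose L hLc hL0 hLp using hex
  set g : A → E := fun a => L a 1 with hg
  -- the endpoint of ANY lift over ANY path from a₀ to a equals g a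
  have hend : ∀ (a : A) (σ : Path a₀ a) (Λ : ℝ → E), Continuous Λ → Λ 0 = e₀ →
      (∀ t ∈ Icc (0:ℝ) 1, p (Λ t) = f (σ (projIcc 0 1 zero_le_one t))) → Λ 1 = g a := by
    intro a σ Λ hc h0' hp'
    have hhom : (σ.map hf).Homotopic ((PathConnectedSpace.somePath a₀ a).map hf) :=
      Path.Homotopic.map (SimplyConnectedSpace.paths_homotopic σ _) ⟨f, hf⟩
    refine lift_end_eq hp hhom hc (hLc a) (h0'.trans (hL0 a).symm) ?_ ?_
    · intro t ht; rw [hp' t ht]; rfl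
    · intro t ht; rw [hLp a t ht]; rfl
  have hpg : p ∘ g = f := by
    funext a
    show p (L a 1) = f a
    rw [hLp a 1 ⟨zero_le_one, le_refl _⟩, projIcc_right]
    congr 1
    exact (PathConnectedSpace.somePath a₀ a).target
  have hga₀ : g a₀ = e₀ := by
    refine (hend a₀ (Path.refl a₀) (fun _ => e₀) continuous_const rfl ?_).symm
    intro t ht
    rw [h0]
    rfl
  refine ⟨g, ?_, hpg, hga₀⟩
  rw [continuous_iff_continuousAt]
  intro a
  haveI : Nonempty (p ⁻¹' {f a}) := ⟨⟨g a, congrFun hpg a⟩⟩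
  set T := (hp (f a)).toTrivialization with hT
  have hfa : f a ∈ T.baseSet := (hp (f a)).mem_toTrivialization_baseSet
  have hga : g a ∈ T.source := T.mem_source.2 (by rw [show p (g a) = f a from congrFun hpg a]; exact hfa)
  obtain ⟨V, ⟨hVnhds, hVpc⟩, hVsub⟩ := (path_connected_basis a).mem_iff.1
    ((T.open_baseSet.preimage hf).mem_nhds hfa)
  have hkey : ∀ b ∈ V, g b = T.toOpenPartialHomeomorph.symm (f b, (T (g a)).2) := by
    intro b hb
    obtain ⟨τ, hτ⟩ := (hVpc.joinedIn a (mem_of_mem_nhds hVnhds) b hb)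
    set c := (T (g a)).2 with hc
    set ℓ : ℝ → E := fun t =>
      T.toOpenPartialHomeomorph.symm (f (τ (projIcc 0 1 zero_le_one (2*t - 1))), c) with hℓ
    have hℓcont : Continuous ℓ := by
      apply T.toOpenPartialHomeomorph.continuousOn_symm.comp_continuous
      · exact (hf.comp (τ.continuous.comp (continuous_projIcc.comp
          ((continuous_const.mul continuous_id).sub continuous_const)))).prodMk
          continuous_const
      · exact fun t => T.mem_target.2 (hVsub (hτ _))
    have hℓhalf : ℓ (1/2) = g a := by
      have h21 : 2*(1/2:ℝ) - 1 = 0 := by norm_num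
      have hτ0 : ∀ h : (0:ℝ) ∈ Icc (0:ℝ) 1, τ ⟨0, h⟩ = a := fun _ => τ.source
      rw [hℓ]
      simp only [h21, projIcc_left]
      rw [hτ0 _]
      have hmk := T.symm_apply_mk_proj hga
      rw [show p (g a) = f a from congrFun hpg a] at hmk
      exact hmk
    set Λ : ℝ → E := fun t => if t ≤ 1/2 then L a (2*t) else ℓ t with hΛ
    have hΛc : Continuous Λ := by
      refine Continuous.if_le ((hLc a).comp (continuous_const.mul continuous_id)) hℓcont
        continuous_id continuous_const ?_
      intro t ht
      rw [ht]
      have h2 : (2:ℝ)*(1/2) = 1 := by norm_num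
      rw [h2, hℓhalf]
    have hΛ0 : Λ 0 = e₀ := by
      rw [hΛ]
      simp only
      rw [if_pos (by norm_num : (0:ℝ) ≤ 1/2), show (2:ℝ)*0 = 0 by ring, hL0 a]
    have hΛp : ∀ t ∈ Icc (0:ℝ) 1, p (Λ t) =
        f (((PathConnectedSpace.somePath a₀ a).trans τ) (projIcc 0 1 zero_le_one t)) := by
      intro t ht
      rw [projIcc_of_mem _ ht, Path.trans_apply]
      by_cases htt : t ≤ 1/2
      · rw [hΛ]
        simp only [if_pos htt]
        rw [dif_pos (show ((⟨t, ht⟩ : Icc (0:ℝ) 1) : ℝ) ≤ 1/2 from htt)]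
        have h2t : 2*t ∈ Icc (0:ℝ) 1 := ⟨by linarith [ht.1], by linarith⟩
        rw [hLp a (2*t) h2t, projIcc_of_mem _ h2t]
      · rw [hΛ]
        simp only [if_neg htt]
        rw [dif_neg (show ¬((⟨t, ht⟩ : Icc (0:ℝ) 1) : ℝ) ≤ 1/2 from htt)]
        have h2t : 2*t - 1 ∈ Icc (0:ℝ) 1 :=
          ⟨by linarith [lt_of_not_ge htt], by linarith [ht.2]⟩
        rw [hℓ]
        simp only
        rw [T.proj_symm_apply' (hVsub (hτ _)), projIcc_of_mem _ h2t]
    have hΛend := hend b ((PathConnectedSpace.somePath a₀ a).trans τ) Λ hΛc hΛ0 hΛp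
    rw [← hΛend, hΛ]
    simp only
    rw [if_neg (by norm_num : ¬(1:ℝ) ≤ 1/2), hℓ]
    simp only
    have h1 : 2*(1:ℝ) - 1 = 1 := by norm_num
    have hτ1 : ∀ h : (1:ℝ) ∈ Icc (0:ℝ) 1, τ ⟨1, h⟩ = b := fun _ => τ.target
    rw [h1, projIcc_right, hτ1]
  have hcont2 : ContinuousAt (fun b => T.toOpenPartialHomeomorph.symm (f b, (T (g a)).2)) a := by
    apply ((T.toOpenPartialHomeomorph.continuousOn_symm.comp
      ((hf.prodMk continuous_const).continuousOn)
      (fun b hb => T.mem_target.2 hb)).continuousAt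
      ((T.open_baseSet.preimage hf).mem_nhds hfa))
  exact hcont2.congr (Filter.eventuallyEq_of_mem hVnhds (fun b hb => (hkey b hb).symm))

theorem exists_deck_fun {A : Type*} [TopologicalSpace A] [PathConnectedSpace A]
    [LocallyPathConnectedSpace A] [SimplyConnectedSpace A] {q : A → X}
    (hq : IsCoveringMap q) (e₁ e₂ : A) (h : q e₁ = q e₂) :
    ∃ τ : A → A, Continuous τ ∧ q ∘ τ = q ∧ τ e₁ = e₂ := by
  obtain ⟨τ, hc, hqt, h1⟩ := exists_lift hq hq.continuous e₁ e₂ h.symm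
  exact ⟨τ, hc, hqt, h1⟩

theorem exists_deck {A : Type*} [TopologicalSpace A] [PathConnectedSpace A]
    [LocallyPathConnectedSpace A] [SimplyConnectedSpace A] {q : A → X}
    (hq : IsCoveringMap q) (e₁ e₂ : A) (h : q e₁ = q e₂) :
    ∃ τ : A ≃ₜ A, q ∘ τ = q ∧ τ e₁ = e₂ := by
  obtain ⟨α, hαc, hαq, hα1⟩ := exists_deck_fun hq e₁ e₂ h
  obtain ⟨β, hβc, hβq, hβ1⟩ := exists_deck_fun hq e₂ e₁ h.symm
  haveI : PreconnectedSpace A := inferInstance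
  have hαβ : α ∘ β = id := by
    refine hq.eq_of_comp_eq (hαc.comp hβc) continuous_id ?_ e₂ ?_
    · rw [← Function.comp_assoc, hαq, hβq]
      rfl
    · show α (β e₂) = e₂
      rw [hβ1, hα1]
  have hβα : β ∘ α = id := by
    refine hq.eq_of_comp_eq (hβc.comp hαc) continuous_id ?_ e₁ ?_
    · rw [← Function.comp_assoc, hβq, hαq]
      rfl
    · show β (α e₁) = e₁
      rw [hα1, hβ1]
  refine ⟨⟨⟨α, β, fun x => congrFun hβα x, fun x => congrFun hαβ x⟩, hαc, hβc⟩, hαq, hα1⟩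

end CVPAux



/-- If the common value classes determined by `(φ̃₀, δ₁ ∘ ψ̃₀)` and
`(φ̃₀, δ₂ ∘ ψ̃₀)` have a common element, then there are deck transformations `α, γ` of `p_X`
and `η, θ` of `p_Y` with `φ̃₀ ∘ α = η ∘ φ̃₀`, `ψ̃₀ ∘ γ = θ ∘ ψ̃₀`, and `δ₂ = η⁻¹ ∘ δ₁ ∘ θ`. -/
theorem doubleCoset_of_commonValueClass_inter_nonempty
    {X Y X' Y' : Type*} [TopologicalSpace X] [TopologicalSpace Y]
    [TopologicalSpace X'] [TopologicalSpace Y']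
    [PathConnectedSpace X'] [LocallyPathConnectedSpace X'] [SimplyConnectedSpace X']
    [PathConnectedSpace Y'] [LocallyPathConnectedSpace Y'] [SimplyConnectedSpace Y']
    (pX : X' → X) (pY : Y' → Y) (hpX : IsCoveringMap pX) (hpY : IsCoveringMap pY)
    (φ ψ : X → Y) (hφ : Continuous φ) (hψ : Continuous ψ)
    (φ₀ ψ₀ : X' → Y') (hφ₀ : Continuous φ₀) (hψ₀ : Continuous ψ₀)
    (hliftφ : pY ∘ φ₀ = φ ∘ pX) (hliftψ : pY ∘ ψ₀ = ψ ∘ pX)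
    (δ₁ δ₂ : Y' ≃ₜ Y') (hδ₁ : pY ∘ δ₁ = pY) (hδ₂ : pY ∘ δ₂ = pY)
    (h : (commonValueClass pX φ₀ ((δ₁ : Y' → Y') ∘ ψ₀) ∩
          commonValueClass pX φ₀ ((δ₂ : Y' → Y') ∘ ψ₀)).Nonempty) :
    ∃ (α γ : X' ≃ₜ X') (η θ : Y' ≃ₜ Y'),
      pX ∘ α = pX ∧ pX ∘ γ = pX ∧ pY ∘ η = pY ∧ pY ∘ θ = pY ∧
      φ₀ ∘ α = η ∘ φ₀ ∧ ψ₀ ∘ γ = θ ∘ ψ₀ ∧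
      (δ₂ : Y' → Y') = (η.symm : Y' → Y') ∘ (δ₁ : Y' → Y') ∘ (θ : Y' → Y') := by
  obtain ⟨ab, h1, h2⟩ := h
  obtain ⟨q1, hq1, hpq1⟩ := h1
  obtain ⟨q2, hq2, hpq2⟩ := h2
  set u₁ := q1.1 with hu₁
  set v₁ := q1.2 with hv₁
  set u₂ := q2.1 with hu₂
  set v₂ := q2.2 with hv₂
  have hcv1 : φ₀ u₁ = δ₁ (ψ₀ v₁) := hq1
  have hcv2 : φ₀ u₂ = δ₂ (ψ₀ v₂) := hq2
  have huu : pX u₂ = pX u₁ := by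
    have e1 : pX u₁ = ab.1 := congrArg Prod.fst hpq1
    have e2 : pX u₂ = ab.1 := congrArg Prod.fst hpq2
    rw [e1, e2]
  have hvv : pX v₂ = pX v₁ := by
    have e1 : pX v₁ = ab.2 := congrArg Prod.snd hpq1
    have e2 : pX v₂ = ab.2 := congrArg Prod.snd hpq2
    rw [e1, e2]
  obtain ⟨α, hαdeck, hα⟩ := CVPAux.exists_deck hpX u₂ u₁ huu
  obtain ⟨γ, hγdeck, hγ⟩ := CVPAux.exists_deck hpX v₂ v₁ hvv
  obtain ⟨η, hηdeck, hη⟩ := CVPAux.exists_deck hpY (φ₀ u₂) (φ₀ u₁)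
    (by rw [show pY (φ₀ u₂) = φ (pX u₂) from congrFun hliftφ u₂,
          show pY (φ₀ u₁) = φ (pX u₁) from congrFun hliftφ u₁, huu])
  obtain ⟨θ, hθdeck, hθ⟩ := CVPAux.exists_deck hpY (ψ₀ v₂) (ψ₀ v₁)
    (by rw [show pY (ψ₀ v₂) = ψ (pX v₂) from congrFun hliftψ v₂,
          show pY (ψ₀ v₁) = ψ (pX v₁) from congrFun hliftψ v₁, hvv])
  have hφα : φ₀ ∘ α = (η : Y' → Y') ∘ φ₀ := by
    refine hpY.eq_of_comp_eq (hφ₀.comp α.continuous) (η.continuous.comp hφ₀) ?_ u₂ ?_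
    · calc pY ∘ (φ₀ ∘ ⇑α) = (pY ∘ φ₀) ∘ ⇑α := rfl
        _ = (φ ∘ pX) ∘ ⇑α := by rw [hliftφ]
        _ = φ ∘ (pX ∘ ⇑α) := rfl
        _ = φ ∘ pX := by rw [hαdeck]
        _ = pY ∘ φ₀ := hliftφ.symm
        _ = (pY ∘ ⇑η) ∘ φ₀ := by rw [hηdeck]
        _ = pY ∘ (⇑η ∘ φ₀) := rfl
    · show φ₀ (α u₂) = η (φ₀ u₂)
      rw [hα, hη]
  have hψγ : ψ₀ ∘ γ = (θ : Y' → Y') ∘ ψ₀ := by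
    refine hpY.eq_of_comp_eq (hψ₀.comp γ.continuous) (θ.continuous.comp hψ₀) ?_ v₂ ?_
    · calc pY ∘ (ψ₀ ∘ ⇑γ) = (pY ∘ ψ₀) ∘ ⇑γ := rfl
        _ = (ψ ∘ pX) ∘ ⇑γ := by rw [hliftψ]
        _ = ψ ∘ (pX ∘ ⇑γ) := rfl
        _ = ψ ∘ pX := by rw [hγdeck]
        _ = pY ∘ ψ₀ := hliftψ.symm
        _ = (pY ∘ ⇑θ) ∘ ψ₀ := by rw [hθdeck]
        _ = pY ∘ (⇑θ ∘ ψ₀) := rfl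
    · show ψ₀ (γ v₂) = θ (ψ₀ v₂)
      rw [hγ, hθ]
  have hηsymm : pY ∘ (η.symm : Y' → Y') = pY := by
    funext y
    have := congrFun hηdeck (η.symm y)
    simpa using this.symm
  have hfinal : (δ₂ : Y' → Y') = (η.symm : Y' → Y') ∘ (δ₁ : Y' → Y') ∘ (θ : Y' → Y') := by
    refine hpY.eq_of_comp_eq δ₂.continuous
      ((η.symm.continuous.comp δ₁.continuous).comp θ.continuous) ?_ (ψ₀ v₂) ?_
    · calc pY ∘ ⇑δ₂ = pY := hδ₂
        _ = pY ∘ ⇑θ := hθdeck.symm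
        _ = (pY ∘ ⇑δ₁) ∘ ⇑θ := by rw [hδ₁]
        _ = ((pY ∘ ⇑η.symm) ∘ ⇑δ₁) ∘ ⇑θ := by rw [hηsymm]
        _ = pY ∘ (⇑η.symm ∘ ⇑δ₁ ∘ ⇑θ) := rfl
    · show δ₂ (ψ₀ v₂) = η.symm (δ₁ (θ (ψ₀ v₂)))
      rw [hθ, ← hcv1, ← hη, Homeomorph.symm_apply_apply, hcv2]
  exact ⟨α, γ, η, θ, hαdeck, hγdeck, hηdeck, hθdeck, hφα, hψγ, hfinal⟩
end

section
/- Let (u, v) and (u', v') be elements of cvp(φ, ψ), with coordinates computed via paths c_φ : x₀ ⇝ u, c_ψ : x₀ ⇝ v, c_φ' : x₀ ⇝ u', c_ψ' : x₀ ⇝ v'. Then there exist g, h ∈ π₁(X, x₀) with [w_φ · (φ∘c_φ') · (ψ∘c_ψ')⁻¹ · w_ψ⁻¹] = Φ(g) · [w_φ · (φ∘c_φ) · (ψ∘c_ψ)⁻¹ · w_ψ⁻¹] · Ψ(h) (i.e. the two coordinates lie in the same double coset of Φ(π₁(X, x₀)) and Ψ(π₁(X, x₀))) if and only if there exist a path a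 in X from u to u' and a path b in X from v to v' such that φ∘a ≃ ψ∘b. -/
open CategoryTheory

attribute [local instance] Path.Homotopic.setoid

namespace CvpAux

variable {Y : Type*} [TopologicalSpace Y]

/-- A point of `Y` viewed in the fundamental groupoid. -/
abbrev fg (y : Y) : FundamentalGroupoid Y := ⟨y⟩

/-- Homotopy class of a path, as a morphism in the fundamental groupoid. -/
def hq {a b : Y} (p : Path a b) : fg a ⟶ fg b := ⟦p⟧

lemma homotopic_iff {a b : Y} (p q : Path a b) : p.Homotopic q ↔ hq p = hq q :=
  ⟨fun h => Quotient.sound h, fun h => Quotient.exact h⟩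

lemma hq_trans {a b c : Y} (p : Path a b) (q : Path b c) : hq (p.trans q) = hq p ≫ hq q :=
  rfl

lemma hq_symm {a b : Y} (p : Path a b) : hq p.symm = inv (hq p) := by
  rw [← Groupoid.inv_eq_inv]; rfl

lemma cast_rfl_rfl {a b : Y} (p : Path a b) : p.cast rfl rfl = p := by
  ext t; rfl

lemma hq_cast {a b a' b' : Y} (p : Path a b) (ha : a' = a) (hb : b' = b) :
    hq (p.cast ha hb) =
      eqToHom (show fg a' = fg a by rw [ha]) ≫ hq p ≫
        eqToHom (show fg b = fg b' by rw [hb]) := by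
  subst ha; subst hb
  simp [cast_rfl_rfl]

end CvpAux

open CvpAux

/-- Two common value pairs `(u, v)` and `(u', v')` of `φ` and `ψ` have coordinates
lying in the same double coset of `Φ(π₁(X, x₀))` and `Ψ(π₁(X, x₀))` in `π₁(Y, y₀)` if and only if
there are paths `a : u ⇝ u'` and `b : v ⇝ v'` in `X` with `φ∘a` homotopic rel endpoints to
`ψ∘b`. -/
theorem coordinates_same_doubleCoset_iff_same_class
    {X Y : Type*} [TopologicalSpace X] [TopologicalSpace Y]
    (φ ψ : X → Y) (hφ : Continuous φ) (hψ : Continuous ψ)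
    (x₀ : X) (y₀ : Y) (wφ : Path y₀ (φ x₀)) (wψ : Path y₀ (ψ x₀))
    (u v u' v' : X) (huv : φ u = ψ v) (hu'v' : φ u' = ψ v')
    (cφ : Path x₀ u) (cψ : Path x₀ v) (cφ' : Path x₀ u') (cψ' : Path x₀ v') :
    (∃ g h : Path x₀ x₀,
      (wφ.trans ((cφ'.map hφ).trans (((cψ'.map hψ).symm.cast hu'v' rfl).trans
          wψ.symm))).Homotopic
        (((wφ.trans ((g.map hφ).trans wφ.symm)).trans
            (wφ.trans ((cφ.map hφ).trans (((cψ.map hψ).symm.cast huv rfl).trans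
              wψ.symm)))).trans
          (wψ.trans ((h.map hψ).trans wψ.symm)))) ↔
    (∃ (a : Path u u') (b : Path v v'),
      (a.map hφ).Homotopic ((b.map hψ).cast huv hu'v')) := by
  constructor
  · rintro ⟨g, h, H⟩
    refine ⟨cφ.symm.trans (g.symm.trans cφ'), cψ.symm.trans (h.trans cψ'), ?_⟩
    rw [homotopic_iff] at H ⊢
    simp only [Path.map_trans, ← Path.map_symm, hq_trans, hq_symm, hq_cast,
      Category.assoc, IsIso.inv_hom_id_assoc, IsIso.hom_inv_id_assoc,
      IsIso.inv_hom_id, IsIso.hom_inv_id, Category.comp_id, Category.id_comp,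
      eqToHom_trans, eqToHom_refl, eqToHom_trans_assoc, IsIso.inv_comp,
      inv_eqToHom] at H ⊢
    have key2 : hq (cφ'.map hφ) ≫ eqToHom (show fg (φ u') = fg (ψ v') by rw [hu'v']) ≫
        inv (hq (cψ'.map hψ)) ≫ inv (hq wψ) =
        hq (g.map hφ) ≫ hq (cφ.map hφ) ≫ eqToHom (show fg (φ u) = fg (ψ v) by rw [huv]) ≫
          inv (hq (cψ.map hψ)) ≫ hq (h.map hψ) ≫ inv (hq wψ) := (cancel_epi (hq wφ)).mp H
    have key3 := congrArg (fun z => z ≫ hq wψ) key2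
    simp only [Category.assoc, IsIso.inv_hom_id, Category.comp_id] at key3
    have key4 := congrArg
      (fun z => z ≫ (hq (cψ'.map hψ) ≫ eqToHom (show fg (ψ v') = fg (φ u') by rw [hu'v']))) key3
    simp only [Category.assoc, IsIso.inv_hom_id_assoc, eqToHom_trans, eqToHom_refl,
      Category.comp_id] at key4
    rw [key4]
    simp only [IsIso.inv_hom_id_assoc]
  · rintro ⟨a, b, hab⟩
    refine ⟨cφ'.trans (a.symm.trans cφ.symm), cψ.trans (b.trans cψ'.symm), ?_⟩
    rw [homotopic_iff] at hab ⊢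
    simp only [Path.map_trans, ← Path.map_symm, hq_trans, hq_symm, hq_cast,
      Category.assoc, IsIso.inv_hom_id_assoc, IsIso.hom_inv_id_assoc,
      IsIso.inv_hom_id, IsIso.hom_inv_id, Category.comp_id, Category.id_comp,
      eqToHom_trans, eqToHom_refl, eqToHom_trans_assoc, IsIso.inv_comp,
      inv_eqToHom] at hab ⊢
    rw [hab]
    simp only [IsIso.inv_comp, inv_eqToHom, Category.assoc, IsIso.inv_hom_id_assoc,
      eqToHom_trans_assoc, eqToHom_refl, Category.id_comp]
end

section
/- Let p_X : X̃ → X and p_Y : Ỹ → Y be covering maps whose total spaces are path-connected, locally path-connected and simply connected, let φ, ψ : X → Y be continuous with liftings φ̃, ψ̃, and let (u, v) be an element of the common value class C = (p_X × p_X)(cvp(φ̃, ψ̃)). Then for any (u', v') ∈ cvp(φ, ψ), one has (u', v') ∈ C if and only if there exist a path a in X from u to u' and a path b in X from v to v' such that φ∘a and ψ∘b are homotopic relative to endpoints. -/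
section HomotopyLiftingLibrary
-- Ported/adapted from a WIP mathlib branch by Junyan Xu (homotopy lifting for covering maps).

open Topology unitInterval Set

variable {E X A : Type*} [TopologicalSpace E] [TopologicalSpace X] [TopologicalSpace A] {p : E → X}

theorem IsLocalHomeomorph.exists_lift_nhds' (hp : IsLocalHomeomorph p)
    {f : C(I × A, X)} {g : I × A → E} (g_lifts : p ∘ g = f)
    (cont_0 : Continuous (g ⟨0, ·⟩)) (a : A) (cont_a : Continuous (g ⟨·, a⟩)) :
    ∃ N ∈ 𝓝 a, ∃ g' : I × A → E, ContinuousOn g' (Set.univ ×ˢ N) ∧ p ∘ g' = f ∧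
      (∀ a, g' (0, a) = g (0, a)) ∧ ∀ t, g' (t, a) = g (t, a) := by
  choose q mem_source hpq using hp
  obtain ⟨t, t_0, t_mono, ⟨n_max, h_max⟩, t_sub⟩ := exists_monotone_Icc_subset_open_cover_unitInterval
    (fun e ↦ (q e).open_source.preimage cont_a)
    fun t _ ↦ Set.mem_iUnion.mpr ⟨g (t, a), mem_source _⟩
  suffices h : ∀ n, ∃ N, a ∈ N ∧ IsOpen N ∧ ∃ g' : I × A → E, ContinuousOn g' (Set.Icc 0 (t n) ×ˢ N) ∧
    p ∘ g' = f ∧ (∀ a, g' (0, a) = g (0, a)) ∧ ∀ t' ≤ t n, g' (t', a) = g (t', a) by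
    obtain ⟨N, haN, N_open, hN⟩ := h n_max
    simp_rw [h_max _ le_rfl] at hN
    refine ⟨N, N_open.mem_nhds haN, ?_⟩; convert hN
    · rw [eq_comm, Set.eq_univ_iff_forall]; exact fun t ↦ ⟨bot_le, le_top⟩
    · rw [imp_iff_right]; exact le_top
  refine Nat.rec ⟨_, Set.mem_univ a, isOpen_univ, g, ?_, g_lifts, fun a ↦ rfl, fun _ _ ↦ rfl⟩
    (fun n ⟨N, haN, N_open, g', cont_g', g'_lifts, g'_0, g'_a⟩ ↦ ?_)
  · refine (cont_0.comp continuous_snd).continuousOn.congr (fun ta ⟨ht, _⟩ ↦ ?_)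
    rw [t_0, Set.Icc_self, Set.mem_singleton_iff] at ht; rw [← ta.eta, ht]; rfl
  obtain ⟨e, h_sub⟩ := t_sub n
  have : Set.Icc (t n) (t (n+1)) ×ˢ {a} ⊆ f ⁻¹' (q e).target := by
    rintro ⟨t0, a'⟩ ⟨ht, ha⟩
    rw [Set.mem_singleton_iff] at ha; dsimp only at ha
    rw [← g_lifts, hpq e, ha]
    exact (q e).map_source (h_sub ht)
  obtain ⟨u, v, -, v_open, hu, hav, huv⟩ := generalized_tube_lemma isClosed_Icc.isCompact
    isCompact_singleton ((q e).open_target.preimage f.continuous) this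
  classical
  refine ⟨_, ?_, v_open.inter <| (cont_g'.comp (Continuous.prodMk_right <| t n).continuousOn
      fun a ha ↦ ⟨?_, ha⟩).isOpen_inter_preimage N_open (q e).open_source,
    fun ta ↦ if ta.1 ≤ t n then g' ta else if f ta ∈ (q e).target then (q e).symm (f ta) else g ta,
    ContinuousOn.if (fun ta ⟨⟨_, hav, _, ha⟩, hfr⟩ ↦ ?_) (cont_g'.mono fun ta ⟨hta, ht⟩ ↦ ?_) ?_,
    ?_, fun a ↦ ?_, fun t0 htn1 ↦ ?_⟩
  · refine ⟨Set.singleton_subset_iff.mp hav, haN, ?_⟩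
    change g' (t n, a) ∈ (q e).source; rw [g'_a _ le_rfl]
    exact h_sub ⟨le_rfl, t_mono n.le_succ⟩
  · rw [← t_0]; exact ⟨t_mono n.zero_le, le_rfl⟩
  · have ht := Set.mem_setOf.mp (frontier_le_subset_eq continuous_fst continuous_const hfr)
    have : f ta ∈ (q e).target := huv ⟨hu (by rw [ht]; exact ⟨le_rfl, t_mono n.le_succ⟩), hav⟩
    rw [if_pos this]
    apply (q e).injOn (by rw [← ta.eta, ht]; exact ha) ((q e).map_target this)
    rw [(q e).right_inv this, ← hpq e]; exact congr_fun g'_lifts ta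
  · rw [closure_le_eq continuous_fst continuous_const] at ht
    exact ⟨⟨hta.1.1, ht⟩, hta.2.2.1⟩
  · simp_rw [not_le]; exact (ContinuousOn.congr ((q e).continuousOn_invFun.comp f.2.continuousOn
      fun _ h ↦ huv ⟨hu ⟨h.2, h.1.1.2⟩, h.1.2.1⟩)
      fun _ h ↦ if_pos <| huv ⟨hu ⟨h.2, h.1.1.2⟩, h.1.2.1⟩).mono
        (Set.inter_subset_inter_right _ <| closure_lt_subset_le continuous_const continuous_fst)
  · ext ta; rw [Function.comp_apply]; split_ifs with _ hv
    · exact congr_fun g'_lifts ta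
    · rw [hpq e, (q e).right_inv hv]
    · exact congr_fun g_lifts ta
  · rw [← g'_0]; exact if_pos bot_le
  · dsimp only; split_ifs with htn hf
    · exact g'_a t0 htn
    · apply (q e).injOn ((q e).map_target hf) (h_sub ⟨le_of_not_ge htn, htn1⟩)
      rw [(q e).right_inv hf, ← hpq e]; exact (congr_fun g_lifts _).symm
    · rfl

namespace IsLocalHomeomorph

variable (homeo : IsLocalHomeomorph p) (sep : IsSeparatedMap p)
include homeo sep

theorem continuous_lift' (f : C(I × A, X)) {g : I × A → E} (g_lifts : p ∘ g = f)
    (cont_0 : Continuous (g ⟨0, ·⟩)) (cont_A : ∀ a, Continuous (g ⟨·, a⟩)) : Continuous g := by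
  rw [continuous_iff_continuousAt]
  intro ⟨t, a⟩
  obtain ⟨N, haN, g', cont_g', g'_lifts, g'_0, -⟩ :=
    homeo.exists_lift_nhds' g_lifts cont_0 a (cont_A a)
  refine (cont_g'.congr fun ⟨t, a⟩ ⟨_, ha⟩ ↦ ?_).continuousAt (prod_mem_nhds Filter.univ_mem haN)
  refine congr_fun (sep.eq_of_comp_eq (g₁ := (g ⟨·, a⟩)) (g₂ := (g' ⟨·, a⟩))
    homeo.isLocallyInjective (cont_A a)
    (cont_g'.comp_continuous (Continuous.prodMk_left a) (fun _ ↦ ⟨trivial, ha⟩))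
    (funext fun t ↦ (congr_fun (g_lifts.trans g'_lifts.symm) (t, a))) 0 (g'_0 a).symm) t

end IsLocalHomeomorph

namespace IsCoveringMap
variable (hp : IsCoveringMap p)
include hp

section path_lifting
variable (γ : C(I,X)) (e : E) (γ_0 : γ 0 = p e)
include γ_0

/-- The path lifting property (existence and uniqueness) for covering maps. -/
theorem exists_path_lifts' : ∃ Γ : C(I,E), p ∘ Γ = γ ∧ Γ 0 = e := by
  have key : ∀ x, ∃ V : Set X, IsOpen V ∧ x ∈ V ∧
      (p ⁻¹' V = ∅ ∨ ∃ q : Bundle.Trivialization (p ⁻¹' {x}) p, q.baseSet = V) := by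
    intro x
    by_cases hx : Nonempty (p ⁻¹' {x})
    · exact ⟨_, (hp x).toTrivialization.open_baseSet, (hp x).mem_toTrivialization_baseSet,
        .inr ⟨_, rfl⟩⟩
    · obtain ⟨_, U, hxU, hU, -, H, -⟩ := hp x
      exact ⟨U, hU, hxU, .inl (Set.eq_empty_iff_forall_notMem.mpr fun e he ↦ hx ⟨(H ⟨e, he⟩).2⟩)⟩
  choose V hV hxV hor using key
  obtain ⟨t, t_0, t_mono, ⟨n_max, h_max⟩, t_sub⟩ := exists_monotone_Icc_subset_open_cover_unitInterval
    (fun x ↦ (hV x).preimage γ.continuous) fun t _ ↦ Set.mem_iUnion.2 ⟨γ t, hxV _⟩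
  suffices h : ∀ n, ∃ Γ : I → E, ContinuousOn Γ (Set.Icc 0 (t n)) ∧
    (Set.Icc 0 (t n)).EqOn (p ∘ Γ) γ ∧ Γ 0 = e by
    obtain ⟨Γ, cont, eqOn, Γ_0⟩ := h n_max; rw [h_max _ le_rfl] at cont eqOn
    exact ⟨⟨Γ, continuousOn_univ.mp
      (by convert cont; rw [eq_comm, Set.eq_univ_iff_forall]; exact fun t ↦ ⟨bot_le, le_top⟩)⟩,
      funext fun _ ↦ eqOn ⟨bot_le, le_top⟩, Γ_0⟩
  refine Nat.rec ⟨fun _ ↦ e, continuous_const.continuousOn, fun t ht ↦ ?_, rfl⟩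
    fun n ⟨Γ, cont, eqOn, Γ_0⟩ ↦ ?_
  · rw [t_0, Set.Icc_self] at ht; cases ht; exact γ_0.symm
  obtain ⟨x, t_sub⟩ := t_sub n
  rcases hor x with hemp | ⟨q, hq⟩
  · have pΓtn : p (Γ (t n)) = γ (t n) := eqOn ⟨t_0 ▸ t_mono n.zero_le, le_rfl⟩
    have : Γ (t n) ∈ p ⁻¹' V x := by
      rw [Set.mem_preimage, pΓtn]; exact t_sub ⟨le_rfl, t_mono n.le_succ⟩
    rw [hemp] at this; exact this.elim
  rw [← hq] at t_sub
  refine ⟨fun s ↦ if s ≤ t n then Γ s else q.invFun (γ s, (q (Γ (t n))).2),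
    ContinuousOn.if (fun s hs ↦ ?_) (cont.mono fun _ h ↦ ?_) ?_, fun s hs ↦ ?_, ?_⟩
  · have pΓtn : p (Γ (t n)) = γ (t n) := eqOn ⟨t_0 ▸ t_mono n.zero_le, le_rfl⟩
    cases frontier_Iic_subset _ hs.2
    rw [← pΓtn]
    refine (q.symm_apply_mk_proj ?_).symm
    rw [q.mem_source, pΓtn]
    exact t_sub ⟨le_rfl, t_mono n.le_succ⟩
  · rw [closure_le_eq continuous_id' continuous_const] at h; exact ⟨h.1.1, h.2⟩
  · apply q.continuousOn_invFun.comp ((Continuous.prodMk_left _).comp γ.2).continuousOn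
    simp_rw [not_le, q.target_eq]; intro s h
    exact ⟨t_sub ⟨closure_lt_subset_le continuous_const continuous_subtype_val h.2, h.1.2⟩, trivial⟩
  · rw [Function.comp_apply]; split_ifs with h
    exacts [eqOn ⟨hs.1, h⟩, q.proj_symm_apply' (t_sub ⟨le_of_not_ge h, hs.2⟩)]
  · dsimp only; rwa [if_pos (t_0 ▸ t_mono n.zero_le)]

noncomputable def liftPath' : C(I,E) := (hp.exists_path_lifts' γ e γ_0).choose

lemma liftPath_lifts' : p ∘ hp.liftPath' γ e γ_0 = γ := (hp.exists_path_lifts' γ e γ_0).choose_spec.1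
lemma liftPath_zero' : hp.liftPath' γ e γ_0 0 = e := (hp.exists_path_lifts' γ e γ_0).choose_spec.2

variable {γ e}
lemma eq_liftPath_iff'' {Γ : I → E} : Γ = hp.liftPath' γ e γ_0 ↔ Continuous Γ ∧ p ∘ Γ = γ ∧ Γ 0 = e :=
  have lifts := hp.liftPath_lifts' γ e γ_0
  have zero := hp.liftPath_zero' γ e γ_0
  ⟨fun h ↦ h ▸ ⟨(hp.liftPath' γ e γ_0).2, lifts, zero⟩, fun ⟨Γ_cont, Γ_lifts, Γ_0⟩ ↦
    hp.eq_of_comp_eq Γ_cont (hp.liftPath' γ e γ_0).continuous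
      (Γ_lifts.trans lifts.symm) 0 (Γ_0.trans zero.symm)⟩

end path_lifting

section homotopy_lifting
variable (H : C(I × A, X)) (f : C(A, E)) (H_0 : ∀ a, H (0, a) = p (f a))

@[simps] noncomputable def liftHomotopy' : C(I × A, E) where
  toFun ta := hp.liftPath' (H.comp <| (ContinuousMap.id I).prodMk <| ContinuousMap.const I ta.2)
    (f ta.2) (H_0 ta.2) ta.1
  continuous_toFun := hp.isLocalHomeomorph.continuous_lift' hp.isSeparatedMap H
    (by ext ⟨t, a⟩; exact congr_fun (hp.liftPath_lifts' _ _ _) t)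
    (by convert f.continuous with a; exact hp.liftPath_zero' _ _ _)
    fun a ↦ by dsimp only; exact (hp.liftPath' _ _ (H_0 a)).2

lemma liftHomotopy_lifts' : p ∘ hp.liftHomotopy' H f H_0 = H :=
  funext fun ⟨t, _⟩ ↦ congr_fun (hp.liftPath_lifts' _ _ _) t

lemma liftHomotopy_zero' (a : A) : hp.liftHomotopy' H f H_0 (0, a) = f a := hp.liftPath_zero' _ _ _

variable {H f} {f₀ f₁ : C(A, X)} {S : Set A} (F : f₀.HomotopyRel f₁ S)

open ContinuousMap in
noncomputable def liftHomotopyRel' [PreconnectedSpace A]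
    {f₀' f₁' : C(A, E)} (he : ∃ a ∈ S, f₀' a = f₁' a)
    (h₀ : p ∘ f₀' = f₀) (h₁ : p ∘ f₁' = f₁) : f₀'.HomotopyRel f₁' S :=
  have F_0 : ∀ a, F (0, a) = p (f₀' a) := fun a ↦ (F.apply_zero a).trans (congr_fun h₀ a).symm
  have rel : ∀ t, ∀ a ∈ S, hp.liftHomotopy' F f₀' F_0 (t, a) = f₀' a := fun t a ha ↦ by
    rw [liftHomotopy'_apply]
    refine (hp.const_of_comp (hp.liftPath' _ _ _).continuous (fun s s' ↦ ?_) t 0).trans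
      (hp.liftPath_zero' _ _ _)
    refine (congr_fun (hp.liftPath_lifts' _ _ (F_0 a)) s).trans
      (Eq.trans ?_ (congr_fun (hp.liftPath_lifts' _ _ (F_0 a)) s').symm)
    exact (F.prop s a ha).trans (F.prop s' a ha).symm
  { toContinuousMap := hp.liftHomotopy' F f₀' F_0
    map_zero_left := hp.liftHomotopy_zero' F f₀' F_0
    map_one_left := by
      obtain ⟨a, ha, he⟩ := he
      have key : (fun a ↦ hp.liftHomotopy' F f₀' F_0 (1, a)) = ⇑f₁' := by
        have c1 : Continuous (fun a ↦ hp.liftHomotopy' F f₀' F_0 (1, a)) :=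
          by exact (ContinuousMap.continuous _).comp (Continuous.prodMk_right 1)
        refine hp.eq_of_comp_eq c1 f₁'.continuous (funext fun a ↦ ?_) a
          ((rel 1 a ha).trans he)
        exact (congr_fun (hp.liftHomotopy_lifts' F f₀' _) (1, a)).trans
          ((F.apply_one a).trans (congr_fun h₁ a).symm)
      exact fun a ↦ congr_fun key a
    prop' := rel }

theorem liftPath_apply_one_eq_of_homotopicRel' {γ₀ γ₁ : C(I, X)}
    (h : γ₀.HomotopicRel γ₁ {0,1}) (e : E) (h₀ : γ₀ 0 = p e) (h₁ : γ₁ 0 = p e) :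
    hp.liftPath' γ₀ e h₀ 1 = hp.liftPath' γ₁ e h₁ 1 := by
  obtain ⟨H⟩ := h
  have := hp.liftHomotopyRel' (f₀' := hp.liftPath' γ₀ e h₀) (f₁' := hp.liftPath' γ₁ e h₁) H
    ⟨0, .inl rfl, by simp_rw [liftPath_zero']⟩ (liftPath_lifts' _ _ _ _) (liftPath_lifts' _ _ _ _)
  rw [← this.eq_fst 0 (.inr rfl), ← this.eq_snd 0 (.inr rfl)]

end homotopy_lifting
end IsCoveringMap

end HomotopyLiftingLibrary

/-- Let `(u, v)` be a member of the common value class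
`C = (p_X × p_X)(cvp(φ̃, ψ̃))`. A common value pair `(u', v')` of `φ` and `ψ` belongs to `C`
if and only if there exist paths `a : u ⇝ u'` and `b : v ⇝ v'` in `X` with `φ∘a`
homotopic rel endpoints to `ψ∘b`. -/
theorem mem_commonValueClass_iff_exists_paths
    {X Y X' Y' : Type*} [TopologicalSpace X] [TopologicalSpace Y]
    [TopologicalSpace X'] [TopologicalSpace Y']
    [PathConnectedSpace X'] [LocallyPathConnectedSpace X'] [SimplyConnectedSpace X']
    [PathConnectedSpace Y'] [LocallyPathConnectedSpace Y'] [SimplyConnectedSpace Y']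
    (pX : X' → X) (pY : Y' → Y) (hpX : IsCoveringMap pX) (hpY : IsCoveringMap pY)
    (φ ψ : X → Y) (hφ : Continuous φ) (hψ : Continuous ψ)
    (φt ψt : X' → Y') (hφt : Continuous φt) (hψt : Continuous ψt)
    (hliftφ : pY ∘ φt = φ ∘ pX) (hliftψ : pY ∘ ψt = ψ ∘ pX)
    (u v : X) (huvC : (u, v) ∈ commonValueClass pX φt ψt)
    (u' v' : X) (hu'v' : φ u' = ψ v') :
    (u', v') ∈ commonValueClass pX φt ψt ↔
      ∃ (a : Path u u') (b : Path v v') (h₁ : φ u = ψ v),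
        (a.map hφ).Homotopic ((b.map hψ).cast h₁ hu'v') := by
  obtain ⟨⟨ut, vt⟩, hcv, heq⟩ := huvC
  simp only [Prod.mk.injEq] at heq
  obtain ⟨h1, h2⟩ := heq
  subst h1; subst h2
  replace hcv : φt ut = ψt vt := hcv
  have h₁ : φ (pX ut) = ψ (pX vt) := by
    have e1 := congr_fun hliftφ ut
    have e2 := congr_fun hliftψ vt
    simp only [Function.comp_apply] at e1 e2
    rw [← e1, ← e2, hcv]
  constructor
  · rintro ⟨⟨ut', vt'⟩, hcv', heq'⟩
    replace hcv' : φt ut' = ψt vt' := hcv'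
    simp only [Prod.mk.injEq] at heq'
    obtain ⟨h1, h2⟩ := heq'
    subst h1; subst h2
    set aT := PathConnectedSpace.somePath ut ut'
    set bT := PathConnectedSpace.somePath vt vt'
    refine ⟨aT.map hpX.continuous, bT.map hpX.continuous, h₁, ?_⟩
    obtain ⟨H⟩ := SimplyConnectedSpace.paths_homotopic (aT.map hφt) ((bT.map hψt).cast hcv hcv')
    exact ⟨(H.compContinuousMap ⟨pY, hpY.continuous⟩).cast
      (ContinuousMap.ext fun t ↦ congr_fun hliftφ (aT t))
      (ContinuousMap.ext fun t ↦ congr_fun hliftψ (bT t))⟩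
  · rintro ⟨a, b, h₁', ⟨H⟩⟩
    have ha0 : a.toContinuousMap 0 = pX ut := a.source
    have hb0 : b.toContinuousMap 0 = pX vt := b.source
    set A := hpX.liftPath' a.toContinuousMap ut ha0 with hA
    set B := hpX.liftPath' b.toContinuousMap vt hb0 with hB
    have hApX : pX ∘ A = a := hpX.liftPath_lifts' _ _ _
    have hBpX : pX ∘ B = b := hpX.liftPath_lifts' _ _ _
    have hγ₀0 : (a.map hφ).toContinuousMap 0 = pY (φt ut) := by
      have e1 := congr_fun hliftφ ut
      simp only [Function.comp_apply] at e1
      show φ (a 0) = pY (φt ut)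
      rw [a.source, ← e1]
    have hγ₁0 : (b.map hψ).toContinuousMap 0 = pY (φt ut) := by
      have e2 := congr_fun hliftψ vt
      simp only [Function.comp_apply] at e2
      show ψ (b 0) = pY (φt ut)
      rw [b.source, hcv, ← e2]
    have hrel : (a.map hφ).toContinuousMap.HomotopicRel (b.map hψ).toContinuousMap {0, 1} :=
      ⟨ContinuousMap.HomotopyWith.cast H rfl (ContinuousMap.ext fun t ↦ rfl)⟩
    have key := hpY.liftPath_apply_one_eq_of_homotopicRel' hrel (φt ut) hγ₀0 hγ₁0
    have hΓ₀ : φt ∘ A = hpY.liftPath' (a.map hφ).toContinuousMap (φt ut) hγ₀0 :=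
      (hpY.eq_liftPath_iff'' hγ₀0).mpr ⟨hφt.comp A.continuous,
        by rw [← Function.comp_assoc, hliftφ, Function.comp_assoc, hApX]; rfl,
        by show φt (A 0) = φt ut; rw [hpX.liftPath_zero']⟩
    have hΓ₁ : ψt ∘ B = hpY.liftPath' (b.map hψ).toContinuousMap (φt ut) hγ₁0 :=
      (hpY.eq_liftPath_iff'' hγ₁0).mpr ⟨hψt.comp B.continuous,
        by rw [← Function.comp_assoc, hliftψ, Function.comp_assoc, hBpX]; rfl,
        by show ψt (B 0) = φt ut; rw [hpX.liftPath_zero', hcv]⟩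
    refine ⟨(A 1, B 1), ?_, ?_⟩
    · show φt (A 1) = ψt (B 1)
      have e1 := congr_fun hΓ₀ 1
      have e2 := congr_fun hΓ₁ 1
      simp only [Function.comp_apply] at e1 e2
      rw [e1, e2, key]
    · show (pX (A 1), pX (B 1)) = (u', v')
      have h1 : pX (A 1) = u' := (congr_fun hApX 1).trans a.target
      have h2 : pX (B 1) = v' := (congr_fun hBpX 1).trans b.target
      rw [h1, h2]
end

section
/- Let H_φ : X × [0,1] → Y be a homotopy from φ to φ' and H_ψ : X × [0,1] → Y a homotopy from ψ to ψ'. Fix basepoints x₀ ∈ X, y₀ ∈ Y, reference paths w_φ from y₀ to φ(x₀) and w_ψ from y₀ to ψ(x₀), and set w_φ' = w_φ · (t ↦ H_φ(x₀, t)) and w_ψ' = w_ψ · (t ↦ H_ψ(x₀, t)). Let (u, v) ∈ cvp(φ, ψ) and (u', v') ∈ cvp(φ', ψ'), and choose paths c_φ : x₀ ⇝ u, c_ψ : x₀ ⇝ v, c_φ' : x₀ ⇝ u', c_ψ' : x₀ ⇝ v'. Then there exist g, h ∈ π₁(X, x₀) with [w_φ' · (φ'∘c_φ') · (ψ'∘c_ψ')⁻¹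 · w_ψ'⁻¹] = Φ(g) · [w_φ · (φ∘c_φ) · (ψ∘c_ψ)⁻¹ · w_ψ⁻¹] · Ψ(h) in π₁(Y, y₀) if and only if there exist a path a in X from u to u' and a path b in X from v to v' such that the trace paths t ↦ H_φ(a(t), t) and t ↦ H_ψ(b(t), t) are homotopic relative to endpoints in Y. -/
/-- The trace path of a homotopy `H : X × I → Y` along a path `a`, `t ↦ H (a t, t)`. -/
def tracePath {X Y : Type*} [TopologicalSpace X] [TopologicalSpace Y]
    (H : C(X × unitInterval, Y)) {u u' : X} (a : Path u u') :
    Path (H (u, 0)) (H (u', 1)) where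
  toFun t := H (a t, t)
  continuous_toFun := H.continuous.comp ((a.continuous).prodMk continuous_id)
  source' := by simp
  target' := by simp

/-- Continuity of the `t`-slice of a homotopy. -/
theorem sliceCont {X Y : Type*} [TopologicalSpace X] [TopologicalSpace Y]
    (H : C(X × unitInterval, Y)) (t : unitInterval) :
    Continuous fun x : X => H (x, t) :=
  H.continuous.comp (continuous_id.prodMk continuous_const)

open CategoryTheory unitInterval
attribute [local instance] Path.Homotopic.setoid

namespace TraceAux

instance : ContractibleSpace (I × I) := by
  have h : Convex ℝ ((Set.Icc (0:ℝ) 1) ×ˢ (Set.Icc (0:ℝ) 1)) :=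
    (convex_Icc 0 1).prod (convex_Icc 0 1)
  have : ContractibleSpace ↥((Set.Icc (0:ℝ) 1) ×ˢ (Set.Icc (0:ℝ) 1)) :=
    h.contractibleSpace ⟨(0,0), by simp⟩
  exact (Homeomorph.Set.prod (Set.Icc (0:ℝ) 1) (Set.Icc (0:ℝ) 1)).symm.contractibleSpace

def diagPath : Path ((0,0) : I × I) (1,1) :=
  ⟨⟨fun t => (t,t), by continuity⟩, rfl, rfl⟩
def botPath : Path ((0,0) : I × I) (1,0) :=
  ⟨⟨fun t => (t,0), by continuity⟩, rfl, rfl⟩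
def rightPath : Path ((1,0) : I × I) (1,1) :=
  ⟨⟨fun t => (1,t), by continuity⟩, rfl, rfl⟩
def leftPath : Path ((0,0) : I × I) (0,1) :=
  ⟨⟨fun t => (0,t), by continuity⟩, rfl, rfl⟩
def topPath : Path ((0,1) : I × I) (1,1) :=
  ⟨⟨fun t => (t,1), by continuity⟩, rfl, rfl⟩

variable {Y : Type*} [TopologicalSpace Y]

def hq {y₁ y₂ : Y} (p : Path y₁ y₂) :
    (⟨y₁⟩ : FundamentalGroupoid Y) ⟶ ⟨y₂⟩ := ⟦p⟧

theorem homotopic_iff {y₁ y₂ : Y} (p q : Path y₁ y₂) : p.Homotopic q ↔ hq p = hq q :=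
  ⟨fun h => Quotient.sound h, fun h => Quotient.exact h⟩

theorem hq_trans {y₁ y₂ y₃ : Y} (p : Path y₁ y₂) (q : Path y₂ y₃) :
    hq (p.trans q) = hq p ≫ hq q := rfl

theorem hq_symm {y₁ y₂ : Y} (p : Path y₁ y₂) : hq p.symm = inv (hq p) := by
  rw [← Groupoid.inv_eq_inv]; rfl

theorem hq_cast {y₁ y₂ y₃ y₄ : Y} (p : Path y₁ y₂) (h1 : y₃ = y₁) (h2 : y₄ = y₂) :
    hq (p.cast h1 h2) =
      eqToHom (by rw [h1]) ≫ hq p ≫ eqToHom (by rw [h2]) := by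
  subst h1; subst h2; simp

variable {X : Type*} [TopologicalSpace X]

def sq (H : C(X × I, Y)) {u u' : X} (a : Path u u') : C(I × I, Y) :=
  ⟨fun st => H (a st.1, st.2),
    H.continuous.comp ((a.continuous.comp continuous_fst).prodMk continuous_snd)⟩

theorem trace_eq_left (H : C(X × I, Y)) {u u' : X} (a : Path u u') :
    hq (tracePath H a) = hq (a.map (sliceCont H 0)) ≫ hq (tracePath H (Path.refl u')) := by
  have h1 : H (u, 0) = H (a 0, 0) := by rw [a.source]
  have h2 : H (u', 1) = H (a 1, 1) := by rw [a.target]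
  have h3 : H (u', 0) = H (a 1, 0) := by rw [a.target]
  have e1 : tracePath H a = (diagPath.map (sq H a).continuous).cast h1 h2 := by
    ext t; rfl
  have e2 : a.map (sliceCont H 0) = (botPath.map (sq H a).continuous).cast h1 h3 := by
    ext t; rfl
  have e3 : tracePath H (Path.refl u') = (rightPath.map (sq H a).continuous).cast h3 h2 := by
    ext t; show H (u', t) = H (a 1, t); rw [a.target]
  have hd : hq (diagPath.map (sq H a).continuous)
      = hq ((botPath.trans rightPath).map (sq H a).continuous) :=
    (homotopic_iff _ _).mp
      (Path.Homotopic.map (SimplyConnectedSpace.paths_homotopic _ _) _)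
  rw [e1, e2, e3]; erw [hq_cast, hq_cast, hq_cast]; rw [hd, Path.map_trans, hq_trans]
  simp

theorem trace_eq_right (H : C(X × I, Y)) {u u' : X} (a : Path u u') :
    hq (tracePath H a) = hq (tracePath H (Path.refl u)) ≫ hq (a.map (sliceCont H 1)) := by
  have h1 : H (u, 0) = H (a 0, 0) := by rw [a.source]
  have h2 : H (u', 1) = H (a 1, 1) := by rw [a.target]
  have h3 : H (u, 1) = H (a 0, 1) := by rw [a.source]
  have e1 : tracePath H a = (diagPath.map (sq H a).continuous).cast h1 h2 := by
    ext t; rfl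
  have e2 : a.map (sliceCont H 1) = (topPath.map (sq H a).continuous).cast h3 h2 := by
    ext t; rfl
  have e3 : tracePath H (Path.refl u) = (leftPath.map (sq H a).continuous).cast h1 h3 := by
    ext t; show H (u, t) = H (a 0, t); rw [a.source]
  have hd : hq (diagPath.map (sq H a).continuous)
      = hq ((leftPath.trans topPath).map (sq H a).continuous) :=
    (homotopic_iff _ _).mp
      (Path.Homotopic.map (SimplyConnectedSpace.paths_homotopic _ _) _)
  rw [e1, e2, e3]; erw [hq_cast, hq_cast, hq_cast]; rw [hd, Path.map_trans, hq_trans]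
  simp

end TraceAux

open TraceAux

/-- Let `H_φ, H_ψ` be homotopies from `φ` to `φ'` and from `ψ` to `ψ'`, with
reference paths `w_φ, w_ψ` for `φ, ψ` and the transported reference paths
`w_φ' = w_φ · (t ↦ H_φ(x₀,t))`, `w_ψ' = w_ψ · (t ↦ H_ψ(x₀,t))` for `φ', ψ'`. Then the
coordinate of a common value pair `(u', v')` of `(φ', ψ')` lies in the same double coset as the
coordinate of a common value pair `(u, v)` of `(φ, ψ)` if and only if there are paths
`a : u ⇝ u'`, `b : v ⇝ v'` whose trace paths `t ↦ H_φ(a(t),t)` and `t ↦ H_ψ(b(t),t)` are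
homotopic rel endpoints. -/
theorem coordinates_related_iff_trace_paths_homotopic
    {X Y : Type*} [TopologicalSpace X] [TopologicalSpace Y]
    (Hφ Hψ : C(X × unitInterval, Y)) (x₀ : X) (y₀ : Y)
    (wφ : Path y₀ (Hφ (x₀, 0))) (wψ : Path y₀ (Hψ (x₀, 0)))
    (u v u' v' : X) (huv : Hφ (u, 0) = Hψ (v, 0)) (hu'v' : Hφ (u', 1) = Hψ (v', 1))
    (cφ : Path x₀ u) (cψ : Path x₀ v) (cφ' : Path x₀ u') (cψ' : Path x₀ v') :
    (∃ g h : Path x₀ x₀,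
      ((wφ.trans (tracePath Hφ (Path.refl x₀))).trans
          ((cφ'.map (sliceCont Hφ 1)).trans
            (((cψ'.map (sliceCont Hψ 1)).symm.cast hu'v' rfl).trans
              (wψ.trans (tracePath Hψ (Path.refl x₀))).symm))).Homotopic
        (((wφ.trans ((g.map (sliceCont Hφ 0)).trans wφ.symm)).trans
            (wφ.trans ((cφ.map (sliceCont Hφ 0)).trans
              (((cψ.map (sliceCont Hψ 0)).symm.cast huv rfl).trans wψ.symm)))).trans
          (wψ.trans ((h.map (sliceCont Hψ 0)).trans wψ.symm)))) ↔
    (∃ (a : Path u u') (b : Path v v'),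
      (tracePath Hφ a).Homotopic ((tracePath Hψ b).cast huv hu'v')) := by
  
  -- abbreviations for atoms
  have hA' : hq (cφ'.map (sliceCont Hφ 1)) =
      inv (hq (tracePath Hφ (Path.refl x₀))) ≫ hq (cφ'.map (sliceCont Hφ 0)) ≫
        hq (tracePath Hφ (Path.refl u')) := by
    rw [IsIso.eq_inv_comp, ← trace_eq_right]; exact trace_eq_left _ _
  have hB' : hq (cψ'.map (sliceCont Hψ 1)) =
      inv (hq (tracePath Hψ (Path.refl x₀))) ≫ hq (cψ'.map (sliceCont Hψ 0)) ≫
        hq (tracePath Hψ (Path.refl v')) := by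
    rw [IsIso.eq_inv_comp, ← trace_eq_right]; exact trace_eq_left _ _
  simp only [homotopic_iff, hq_trans, hq_symm, hq_cast, Path.map_trans, ← Path.map_symm,
    eqToHom_refl, Category.comp_id, Category.id_comp, Category.assoc, IsIso.inv_comp]
  constructor
  · rintro ⟨g, h, heq⟩
    refine ⟨cφ.symm.trans (g.symm.trans cφ'), cψ.symm.trans (h.trans cψ'), ?_⟩
    rw [trace_eq_left Hφ _, trace_eq_left Hψ _]
    simp only [Path.map_trans, ← Path.map_symm, hq_trans, hq_symm, Category.assoc]
    rw [hA', hB'] at heq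
    simp only [Category.assoc, IsIso.inv_hom_id_assoc, IsIso.hom_inv_id_assoc] at heq
    rw [cancel_epi (hq wφ)] at heq
    simp only [IsIso.inv_comp, IsIso.inv_inv, Category.assoc, IsIso.inv_hom_id_assoc,
      IsIso.hom_inv_id_assoc, inv_eqToHom] at heq
    have hTu' : hq (tracePath Hφ (Path.refl u')) =
        inv (hq (cφ'.map (sliceCont Hφ 0))) ≫
          ((hq (cφ'.map (sliceCont Hφ 0)) ≫ hq (tracePath Hφ (Path.refl u')) ≫
              eqToHom (show (⟨Hφ (u',1)⟩ : FundamentalGroupoid Y) = ⟨Hψ (v',1)⟩ by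
                rw [hu'v']) ≫
              inv (hq (tracePath Hψ (Path.refl v'))) ≫ inv (hq (cψ'.map (sliceCont Hψ 0))) ≫
              inv (hq wψ)) ≫
            hq wψ ≫ hq (cψ'.map (sliceCont Hψ 0)) ≫ hq (tracePath Hψ (Path.refl v')) ≫
              eqToHom (show (⟨Hψ (v',1)⟩ : FundamentalGroupoid Y) = ⟨Hφ (u',1)⟩ by
                rw [hu'v'])) := by
      simp
    rw [heq] at hTu'
    rw [hTu']
    simp
  · rintro ⟨a, b, hab⟩
    refine ⟨cφ'.trans (a.symm.trans cφ.symm), cψ.trans (b.trans cψ'.symm), ?_⟩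
    rw [trace_eq_left Hφ a, trace_eq_left Hψ b] at hab
    have hTu' : hq (tracePath Hφ (Path.refl u')) =
        inv (hq (a.map (sliceCont Hφ 0))) ≫
          (hq (a.map (sliceCont Hφ 0)) ≫ hq (tracePath Hφ (Path.refl u'))) := by simp
    rw [hab] at hTu'
    simp only [Path.map_trans, ← Path.map_symm, hq_trans, hq_symm, Category.assoc]
    rw [hA', hB']
    simp only [Category.assoc, IsIso.inv_hom_id_assoc, IsIso.hom_inv_id_assoc]
    rw [hTu']
    simp
end
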